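/- Recursive decomposition of zero-rate QRM codewords: for -1 <= r <= r◇ < m and w = (w_1, w_2) in RM(r◇, m) with w_1, w_2 in RM(r◇, m-1), the state |w>^{(0)}_{r,m} = (1/sqrt(|RM(r,m)|)) sum_{c in RM(r,m)} |w + c> equals (1/sqrt(|B|)) sum_{u in B} |w_1 + u>^{(0)}_{r-1,m-1} tensor |w_2 + u>^{(0)}_{r-1,m-1}, where B is a set of coset representatives of RM(r, m-1) / RM(r-1, m-1). -/

import Mathlib

open scoped BigOperators

/-- The evaluation point `ρ(j) ∈ F₂^m`. -/
def rho (m : ℕ) (j : Fin (2^m)) : Fin m → ZMod 2 :=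
  fun i => if Nat.testBit (j : ℕ) (m - 1 - i.val) then 1 else 0

/-- The evaluation vector of a polynomial over all points of `F₂^m`. -/
noncomputable def evalVec (m : ℕ) (f : MvPolynomial (Fin m) (ZMod 2)) :
    Fin (2^m) → ZMod 2 :=
  fun j => MvPolynomial.eval (rho m j) f

/-- The Reed-Muller code `RM(r, m)` with integer order (so `RM(-1, m) = 0`). -/
noncomputable def RMz (m : ℕ) (r : ℤ) : Submodule (ZMod 2) (Fin (2^m) → ZMod 2) :=
  Submodule.span (ZMod 2)
    {v | ∃ f : MvPolynomial (Fin m) (ZMod 2), (f.totalDegree : ℤ) ≤ r ∧ evalVec m f = v}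

open Classical in
/-- The uniform superposition `(1/√|C|) ∑_{c ∈ C} |w + c⟩` over the coset `w + C`. -/
noncomputable def cosetKet {n : ℕ} (C : Submodule (ZMod 2) (Fin n → ZMod 2))
    (w : Fin n → ZMod 2) : (Fin n → ZMod 2) → ℂ :=
  fun b => if b + w ∈ C then ((1 / Real.sqrt (Nat.card C) : ℝ) : ℂ) else 0

/-- The first half (first `2^m` coordinates) of a length-`2^{m+1}` vector. -/
def lowHalf (m : ℕ) (b : Fin (2^(m+1)) → ZMod 2) : Fin (2^m) → ZMod 2 :=
  fun i => b ⟨i, by have hi := i.isLt; have h : 2^(m+1) = 2^m * 2 := pow_succ 2 m; omega⟩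

/-- The second half (last `2^m` coordinates) of a length-`2^{m+1}` vector. -/
def highHalf (m : ℕ) (b : Fin (2^(m+1)) → ZMod 2) : Fin (2^m) → ZMod 2 :=
  fun i => b ⟨2^m + i, by
    have hi := i.isLt; have h : 2^(m+1) = 2^m * 2 := pow_succ 2 m; omega⟩


namespace ZQRM

open MvPolynomial

variable {m : ℕ}

lemma two_pow_succ (m : ℕ) : 2^(m+1) = 2^m * 2 := pow_succ 2 m

lemma rho_succ_apply (k : Fin (2^(m+1))) (i : Fin m) :
    rho (m+1) k i.succ = rho m ⟨k.val % 2^m, Nat.mod_lt _ (pow_pos (by norm_num) m)⟩ i := by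
  have h1 : m + 1 - 1 - (i.val + 1) = m - 1 - i.val := by omega
  have h2 : m - 1 - i.val < m := by have := i.isLt; omega
  simp only [rho, Fin.val_succ]
  refine if_congr ?_ rfl rfl
  rw [Nat.testBit_mod_two_pow]
  simp only [h2, decide_true, Bool.true_and]
  constructor <;> (intro hh; rw [show m - 1 - i.val = m + 1 - 1 - (i.val + 1) from by omega] at *; exact hh)

lemma rho_zero_apply (k : Fin (2^(m+1))) :
    rho (m+1) k 0 = if 2^m ≤ k.val then 1 else 0 := by
  have key : (k.val).testBit m = decide (2^m ≤ k.val) := by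
    by_cases h : 2^m ≤ k.val
    · have hk : k.val < 2^m * 2 := lt_of_lt_of_eq k.isLt (two_pow_succ m)
      have h3 : k.val = 2^m + (k.val - 2^m) := by omega
      have h4 : (k.val).testBit m = true := by
        rw [h3, Nat.testBit_two_pow_add_eq, Nat.testBit_lt_two_pow (by omega)]
        rfl
      simp [h4, h]
    · rw [Nat.testBit_lt_two_pow (by omega)]
      simp [h]
  simp only [rho, show ((0 : Fin (m+1)).val) = 0 from rfl, Nat.sub_zero, Nat.add_sub_cancel, key]
  by_cases h : 2^m ≤ k.val <;> simp [h]

lemma rho_low (j : Fin (2^m)) (h : (j.val : ℕ) < 2^(m+1)) :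
    rho (m+1) ⟨j.val, h⟩ = Fin.cons 0 (rho m j) := by
  funext i
  refine Fin.cases ?_ (fun i => ?_) i
  · rw [rho_zero_apply, Fin.cons_zero, if_neg (by exact not_le.2 j.isLt)]
  · rw [rho_succ_apply, Fin.cons_succ]
    congr 1
    exact Fin.ext (Nat.mod_eq_of_lt j.isLt)

lemma rho_high (j : Fin (2^m)) (h : 2^m + (j.val : ℕ) < 2^(m+1)) :
    rho (m+1) ⟨2^m + j.val, h⟩ = Fin.cons 1 (rho m j) := by
  funext i
  refine Fin.cases ?_ (fun i => ?_) i
  · rw [rho_zero_apply, Fin.cons_zero, if_pos (Nat.le_add_right _ _)]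
  · rw [rho_succ_apply, Fin.cons_succ]
    congr 1
    refine Fin.ext ?_
    show (2^m + j.val) % 2^m = j.val
    rw [Nat.add_mod_left]
    exact Nat.mod_eq_of_lt j.isLt

lemma lowHalf_evalVec (f : MvPolynomial (Fin (m+1)) (ZMod 2)) (j : Fin (2^m)) :
    lowHalf m (evalVec (m+1) f) j = MvPolynomial.eval (Fin.cons 0 (rho m j)) f := by
  show MvPolynomial.eval (rho (m+1) ⟨j.val, _⟩) f = _
  rw [rho_low]

lemma highHalf_evalVec (f : MvPolynomial (Fin (m+1)) (ZMod 2)) (j : Fin (2^m)) :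
    highHalf m (evalVec (m+1) f) j = MvPolynomial.eval (Fin.cons 1 (rho m j)) f := by
  show MvPolynomial.eval (rho (m+1) ⟨2^m + j.val, _⟩) f = _
  rw [rho_high]


lemma char2 : ∀ a : ZMod 2, a + a = 0 := by decide

lemma evalVec_mem {r : ℤ} {f : MvPolynomial (Fin m) (ZMod 2)}
    (h : (f.totalDegree : ℤ) ≤ r) : evalVec m f ∈ RMz m r :=
  Submodule.subset_span ⟨f, h, rfl⟩

lemma RMz_mono {r r' : ℤ} (h : r ≤ r') : RMz m r ≤ RMz m r' :=
  Submodule.span_mono (fun _v hv => by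
    obtain ⟨f, hf, he⟩ := hv; exact ⟨f, hf.trans h, he⟩)

/-- The "tail" of an exponent vector on `Fin (m+1)`. -/
noncomputable def dtail (d : Fin (m+1) →₀ ℕ) : Fin m →₀ ℕ :=
  Finsupp.equivFunOnFinite.symm (fun i => d i.succ)

@[simp] lemma dtail_apply (d : Fin (m+1) →₀ ℕ) (i : Fin m) : dtail d i = d i.succ := rfl

lemma eval_monomial_cons (a : ZMod 2) (x : Fin m → ZMod 2) (d : Fin (m+1) →₀ ℕ) (c : ZMod 2) :
    MvPolynomial.eval (Fin.cons a x) (MvPolynomial.monomial d c)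
      = c * (a ^ d 0 * ∏ i : Fin m, x i ^ d i.succ) := by
  rw [MvPolynomial.eval_monomial, Finsupp.prod_fintype _ _ (fun _ => pow_zero _),
    Fin.prod_univ_succ]
  simp [Fin.cons_zero, Fin.cons_succ]

lemma eval_monomial_tail (x : Fin m → ZMod 2) (d : Fin (m+1) →₀ ℕ) (c : ZMod 2) :
    MvPolynomial.eval x (MvPolynomial.monomial (dtail d) c)
      = c * ∏ i : Fin m, x i ^ d i.succ := by
  rw [MvPolynomial.eval_monomial, Finsupp.prod_fintype _ _ (fun _ => pow_zero _)]
  simp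

lemma dsum_eq (d : Fin (m+1) →₀ ℕ) :
    (d.sum fun _ e => e) = d 0 + ((dtail d).sum fun _ e => e) := by
  rw [Finsupp.sum_fintype _ _ (fun _ => rfl), Finsupp.sum_fintype _ _ (fun _ => rfl),
    Fin.sum_univ_succ]
  simp

/-- The low-half linear map. -/
def lowL (m : ℕ) : (Fin (2^(m+1)) → ZMod 2) →ₗ[ZMod 2] (Fin (2^m) → ZMod 2) where
  toFun := lowHalf m
  map_add' := fun _ _ => rfl
  map_smul' := fun _ _ => rfl

/-- The high-half linear map. -/
def highL (m : ℕ) : (Fin (2^(m+1)) → ZMod 2) →ₗ[ZMod 2] (Fin (2^m) → ZMod 2) where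
  toFun := highHalf m
  map_add' := fun _ _ => rfl
  map_smul' := fun _ _ => rfl

/-- The Plotkin submodule. -/
noncomputable def K (m : ℕ) (r : ℤ) : Submodule (ZMod 2) (Fin (2^(m+1)) → ZMod 2) :=
  (Submodule.comap (lowL m) (RMz m r)) ⊓ (Submodule.comap (lowL m + highL m) (RMz m (r-1)))

lemma mem_K_iff {r : ℤ} {b : Fin (2^(m+1)) → ZMod 2} :
    b ∈ K m r ↔ lowHalf m b ∈ RMz m r ∧ lowHalf m b + highHalf m b ∈ RMz m (r-1) :=
  Iff.rfl

lemma highHalf_evalVec_monomial (d : Fin (m+1) →₀ ℕ) (c : ZMod 2) :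
    highHalf m (evalVec (m+1) (MvPolynomial.monomial d c))
      = evalVec m (MvPolynomial.monomial (dtail d) c) := by
  funext j
  rw [highHalf_evalVec, eval_monomial_cons, one_pow, one_mul]
  rw [show evalVec m (MvPolynomial.monomial (dtail d) c) j
      = MvPolynomial.eval (rho m j) (MvPolynomial.monomial (dtail d) c) from rfl,
    eval_monomial_tail]

lemma lowHalf_evalVec_monomial_zero (d : Fin (m+1) →₀ ℕ) (c : ZMod 2) (h0 : d 0 = 0) :
    lowHalf m (evalVec (m+1) (MvPolynomial.monomial d c))
      = evalVec m (MvPolynomial.monomial (dtail d) c) := by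
  funext j
  rw [lowHalf_evalVec, eval_monomial_cons, h0, pow_zero, one_mul]
  rw [show evalVec m (MvPolynomial.monomial (dtail d) c) j
      = MvPolynomial.eval (rho m j) (MvPolynomial.monomial (dtail d) c) from rfl,
    eval_monomial_tail]

lemma lowHalf_evalVec_monomial_pos (d : Fin (m+1) →₀ ℕ) (c : ZMod 2) (h0 : d 0 ≠ 0) :
    lowHalf m (evalVec (m+1) (MvPolynomial.monomial d c)) = 0 := by
  funext j
  rw [lowHalf_evalVec, eval_monomial_cons, zero_pow h0, zero_mul, mul_zero]
  rfl

lemma tail_deg_le (d : Fin (m+1) →₀ ℕ) (c : ZMod 2) :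
    ((MvPolynomial.monomial (dtail d) c).totalDegree : ℤ)
      ≤ (((dtail d).sum fun _ e => e : ℕ) : ℤ) := by
  exact_mod_cast MvPolynomial.totalDegree_monomial_le _ _

lemma monomial_mem_K (d : Fin (m+1) →₀ ℕ) (c : ZMod 2) (r : ℤ)
    (hdeg : ((d.sum fun _ e => e : ℕ) : ℤ) ≤ r) :
    evalVec (m+1) (MvPolynomial.monomial d c) ∈ K m r := by
  have hdt : (((dtail d).sum fun _ e => e : ℕ) : ℤ) + d 0 ≤ r := by
    have := dsum_eq d
    omega
  rw [mem_K_iff]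
  by_cases h0 : d 0 = 0
  · rw [lowHalf_evalVec_monomial_zero d c h0, highHalf_evalVec_monomial]
    constructor
    · exact evalVec_mem ((tail_deg_le d c).trans (by omega))
    · rw [show evalVec m (MvPolynomial.monomial (dtail d) c)
          + evalVec m (MvPolynomial.monomial (dtail d) c) = 0 from
          funext fun j => char2 _]
      exact zero_mem _
  · rw [lowHalf_evalVec_monomial_pos d c h0, highHalf_evalVec_monomial, zero_add]
    constructor
    · exact zero_mem _
    · refine evalVec_mem ((tail_deg_le d c).trans ?_)
      have h1 : (1 : ℤ) ≤ (d 0 : ℤ) := by exact_mod_cast Nat.one_le_iff_ne_zero.mpr h0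
      omega

lemma RMz_le_K (r : ℤ) : RMz (m+1) r ≤ K m r := by
  rw [RMz, Submodule.span_le]
  rintro v ⟨f, hf, rfl⟩
  have hsplit : evalVec (m+1) f
      = ∑ d ∈ f.support, evalVec (m+1) (MvPolynomial.monomial d (MvPolynomial.coeff d f)) := by
    funext j
    rw [Finset.sum_apply]
    show MvPolynomial.eval _ f = _
    conv_lhs => rw [f.as_sum]
    rw [map_sum]
    rfl
  rw [hsplit]
  refine Submodule.sum_mem _ fun d hd => ?_
  refine monomial_mem_K d _ r ?_
  refine le_trans ?_ hf
  exact_mod_cast MvPolynomial.le_totalDegree hd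


/-- Duplicating map `x ↦ (x, x)`. -/
def Diag (m : ℕ) : (Fin (2^m) → ZMod 2) →ₗ[ZMod 2] (Fin (2^(m+1)) → ZMod 2) where
  toFun x := fun k => x ⟨k.val % 2^m, Nat.mod_lt _ (pow_pos (by norm_num) m)⟩
  map_add' := fun _ _ => rfl
  map_smul' := fun _ _ => rfl

/-- Embedding `v ↦ (0, v)`. -/
def Emb1 (m : ℕ) : (Fin (2^m) → ZMod 2) →ₗ[ZMod 2] (Fin (2^(m+1)) → ZMod 2) where
  toFun v := fun k => if 2^m ≤ k.val then
      v ⟨k.val % 2^m, Nat.mod_lt _ (pow_pos (by norm_num) m)⟩ else 0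
  map_add' := fun x y => by
    funext k
    by_cases h : 2^m ≤ k.val <;> simp [h]
  map_smul' := fun c x => by
    funext k
    by_cases h : 2^m ≤ k.val <;> simp [h]

@[simp] lemma lowHalf_Diag (x : Fin (2^m) → ZMod 2) : lowHalf m (Diag m x) = x := by
  funext i
  show x ⟨i.val % 2^m, _⟩ = x i
  congr 1
  exact Fin.ext (Nat.mod_eq_of_lt i.isLt)

@[simp] lemma highHalf_Diag (x : Fin (2^m) → ZMod 2) : highHalf m (Diag m x) = x := by
  funext i
  show x ⟨(2^m + i.val) % 2^m, _⟩ = x i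
  congr 1
  refine Fin.ext ?_
  show (2^m + i.val) % 2^m = i.val
  rw [Nat.add_mod_left]
  exact Nat.mod_eq_of_lt i.isLt

@[simp] lemma lowHalf_Emb1 (v : Fin (2^m) → ZMod 2) : lowHalf m (Emb1 m v) = 0 := by
  funext i
  show (if 2^m ≤ i.val then _ else 0) = (0 : ZMod 2)
  rw [if_neg (not_le.2 i.isLt)]

@[simp] lemma highHalf_Emb1 (v : Fin (2^m) → ZMod 2) : highHalf m (Emb1 m v) = v := by
  funext i
  show (if 2^m ≤ 2^m + i.val then v ⟨(2^m + i.val) % 2^m, _⟩ else 0) = v i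
  rw [if_pos (Nat.le_add_right _ _)]
  congr 1
  refine Fin.ext ?_
  show (2^m + i.val) % 2^m = i.val
  rw [Nat.add_mod_left]
  exact Nat.mod_eq_of_lt i.isLt

lemma decomp (b : Fin (2^(m+1)) → ZMod 2) :
    b = Diag m (lowHalf m b) + Emb1 m (lowHalf m b + highHalf m b) := by
  funext k
  have hk : k.val < 2^m * 2 := lt_of_lt_of_eq k.isLt (two_pow_succ m)
  by_cases h : 2^m ≤ k.val
  · have hmod : k.val % 2^m = k.val - 2^m := by
      rw [Nat.mod_eq_sub_mod h, Nat.mod_eq_of_lt (by omega)]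
    show b k = lowHalf m b ⟨k.val % 2^m, _⟩ + (if 2^m ≤ k.val then _ else 0)
    rw [if_pos h]
    show b k = lowHalf m b ⟨k.val % 2^m, _⟩
      + (lowHalf m b ⟨k.val % 2^m, _⟩ + highHalf m b ⟨k.val % 2^m, _⟩)
    rw [← add_assoc, char2, zero_add]
    show b k = b ⟨2^m + (k.val % 2^m), _⟩
    congr 1
    exact Fin.ext (by simp [hmod]; omega)
  · show b k = lowHalf m b ⟨k.val % 2^m, _⟩ + (if 2^m ≤ k.val then _ else 0)
    rw [if_neg h, add_zero]
    show b k = b ⟨k.val % 2^m, _⟩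
    congr 1
    exact Fin.ext (by simp [Nat.mod_eq_of_lt (not_le.1 h)])

lemma rho_comp_succ (k : Fin (2^(m+1))) :
    rho (m+1) k ∘ Fin.succ
      = rho m ⟨k.val % 2^m, Nat.mod_lt _ (pow_pos (by norm_num) m)⟩ :=
  funext fun i => rho_succ_apply k i

lemma evalVec_rename (g : MvPolynomial (Fin m) (ZMod 2)) :
    evalVec (m+1) (MvPolynomial.rename Fin.succ g) = Diag m (evalVec m g) := by
  funext k
  show MvPolynomial.eval (rho (m+1) k) _ = MvPolynomial.eval _ g
  rw [MvPolynomial.eval_rename, rho_comp_succ]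

lemma evalVec_X0_mul_rename (g : MvPolynomial (Fin m) (ZMod 2)) :
    evalVec (m+1) (MvPolynomial.X 0 * MvPolynomial.rename Fin.succ g)
      = Emb1 m (evalVec m g) := by
  funext k
  show MvPolynomial.eval (rho (m+1) k) _ = _
  rw [map_mul, MvPolynomial.eval_X, MvPolynomial.eval_rename, rho_zero_apply]
  have : (MvPolynomial.eval (rho (m+1) k ∘ Fin.succ)) g
      = evalVec m g ⟨k.val % 2^m, Nat.mod_lt _ (pow_pos (by norm_num) m)⟩ := by
    rw [rho_comp_succ]
    rfl
  rw [this]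
  show _ = (if 2^m ≤ k.val then _ else 0)
  by_cases h : 2^m ≤ k.val
  · rw [if_pos h, if_pos h, one_mul]
  · rw [if_neg h, if_neg h, zero_mul]

lemma Diag_mem {r : ℤ} {x : Fin (2^m) → ZMod 2} (hx : x ∈ RMz m r) :
    Diag m x ∈ RMz (m+1) r := by
  refine Submodule.span_induction ?_ ?_ ?_ ?_ hx
  · rintro v ⟨g, hg, rfl⟩
    rw [← evalVec_rename]
    exact evalVec_mem (le_trans (by exact_mod_cast MvPolynomial.totalDegree_rename_le _ _) hg)
  · rw [map_zero]; exact zero_mem _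
  · intro a b _ _ ha hb
    rw [map_add]; exact add_mem ha hb
  · intro c a _ ha
    rw [map_smul]; exact Submodule.smul_mem _ c ha

lemma Emb1_mem {r : ℤ} {v : Fin (2^m) → ZMod 2} (hv : v ∈ RMz m (r-1)) :
    Emb1 m v ∈ RMz (m+1) r := by
  refine Submodule.span_induction ?_ ?_ ?_ ?_ hv
  · rintro v ⟨g, hg, rfl⟩
    rw [← evalVec_X0_mul_rename]
    refine evalVec_mem ?_
    have h1 : (MvPolynomial.X (0 : Fin (m+1)) * MvPolynomial.rename Fin.succ g).totalDegree
        ≤ 1 + g.totalDegree := by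
      refine le_trans (MvPolynomial.totalDegree_mul _ _) ?_
      have := MvPolynomial.totalDegree_rename_le Fin.succ g
      have := MvPolynomial.totalDegree_X (0 : Fin (m+1)) (R := ZMod 2)
      omega
    have h2 : ((MvPolynomial.X (0 : Fin (m+1)) * MvPolynomial.rename Fin.succ g).totalDegree : ℤ)
        ≤ 1 + (g.totalDegree : ℤ) := by exact_mod_cast h1
    omega
  · rw [map_zero]; exact zero_mem _
  · intro a b _ _ ha hb
    rw [map_add]; exact add_mem ha hb
  · intro c a _ ha
    rw [map_smul]; exact Submodule.smul_mem _ c ha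

theorem mem_RMz_succ_iff {r : ℤ} (b : Fin (2^(m+1)) → ZMod 2) :
    b ∈ RMz (m+1) r ↔
      lowHalf m b ∈ RMz m r ∧ lowHalf m b + highHalf m b ∈ RMz m (r-1) := by
  constructor
  · intro hb
    exact mem_K_iff.1 (RMz_le_K r hb)
  · rintro ⟨h1, h2⟩
    rw [decomp b]
    exact add_mem (Diag_mem h1) (Emb1_mem h2)


lemma add_add_cancel_left {n : ℕ} (a b : Fin n → ZMod 2) : a + (a + b) = b := by
  funext i
  simp only [Pi.add_apply]
  rw [← add_assoc, char2, zero_add]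

lemma add_add_cancel_right {n : ℕ} (a b : Fin n → ZMod 2) : (a + b) + b = a := by
  funext i
  simp only [Pi.add_apply]
  rw [add_assoc, char2, add_zero]

/-- The Plotkin equivalence for counting. -/
noncomputable def plotkinEquiv (m : ℕ) (r : ℤ) :
    ↥(RMz (m+1) r) ≃ ↥(RMz m r) × ↥(RMz m (r-1)) where
  toFun b := (⟨lowHalf m b.1, ((mem_RMz_succ_iff b.1).1 b.2).1⟩,
    ⟨lowHalf m b.1 + highHalf m b.1, ((mem_RMz_succ_iff b.1).1 b.2).2⟩)
  invFun p := ⟨Diag m p.1.1 + Emb1 m p.2.1, by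
    rw [mem_RMz_succ_iff]
    have hl : lowHalf m (Diag m p.1.1 + Emb1 m p.2.1) = p.1.1 := by
      show lowHalf m (Diag m p.1.1) + lowHalf m (Emb1 m p.2.1) = _
      rw [lowHalf_Diag, lowHalf_Emb1, add_zero]
    have hh : highHalf m (Diag m p.1.1 + Emb1 m p.2.1) = p.1.1 + p.2.1 := by
      show highHalf m (Diag m p.1.1) + highHalf m (Emb1 m p.2.1) = _
      rw [highHalf_Diag, highHalf_Emb1]
    rw [hl, hh, add_add_cancel_left]
    exact ⟨p.1.2, p.2.2⟩⟩
  left_inv b := Subtype.ext (decomp b.1).symm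
  right_inv p := by
    have hl : lowHalf m (Diag m p.1.1 + Emb1 m p.2.1) = p.1.1 := by
      show lowHalf m (Diag m p.1.1) + lowHalf m (Emb1 m p.2.1) = _
      rw [lowHalf_Diag, lowHalf_Emb1, add_zero]
    have hh : highHalf m (Diag m p.1.1 + Emb1 m p.2.1) = p.1.1 + p.2.1 := by
      show highHalf m (Diag m p.1.1) + highHalf m (Emb1 m p.2.1) = _
      rw [highHalf_Diag, highHalf_Emb1]
    ext1
    · exact Subtype.ext hl
    · refine Subtype.ext ?_
      show lowHalf m _ + highHalf m _ = p.2.1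
      rw [hl, hh, add_add_cancel_left]

lemma card_RMz_succ (m : ℕ) (r : ℤ) :
    Nat.card (RMz (m+1) r) = Nat.card (RMz m r) * Nat.card (RMz m (r-1)) := by
  rw [Nat.card_congr (plotkinEquiv m r), Nat.card_prod]

lemma card_RMz_eq_B {r : ℤ} (h₁ : -1 ≤ r) (B : Finset (Fin (2^m) → ZMod 2))
    (hB₁ : ∀ u ∈ B, u ∈ RMz m r)
    (hB₂ : ∀ v ∈ RMz m r, ∃! u, u ∈ B ∧ v + u ∈ RMz m (r - 1)) :
    Nat.card (RMz m r) = B.card * Nat.card (RMz m (r-1)) := by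
  have hmono : RMz m (r-1) ≤ RMz m r := RMz_mono (by omega)
  let f : (↥B × ↥(RMz m (r-1))) → ↥(RMz m r) := fun p =>
    ⟨p.1.1 + p.2.1, add_mem (hB₁ _ p.1.2) (hmono p.2.2)⟩
  have hbij : Function.Bijective f := by
    constructor
    · rintro ⟨⟨u, huB⟩, ⟨v, hv⟩⟩ ⟨⟨u', huB'⟩, ⟨v', hv'⟩⟩ h
      have hx : u + v = u' + v' := congrArg Subtype.val h
      have hxmem : u + v ∈ RMz m r := add_mem (hB₁ _ huB) (hmono hv)
      obtain ⟨u₀, -, huniq⟩ := hB₂ _ hxmem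
      have hc : (u + v) + u = v := by rw [add_comm u v]; exact add_add_cancel_right v u
      have hc' : (u' + v') + u' = v' := by rw [add_comm u' v']; exact add_add_cancel_right v' u'
      have h1 : u = u₀ := huniq u ⟨huB, by rw [hc]; exact hv⟩
      have h2 : u' = u₀ := huniq u' ⟨huB', by rw [hx, hc']; exact hv'⟩
      have huu : u = u' := h1.trans h2.symm
      have hvv : v = v' := by
        rw [← hc, ← hc', hx, huu]
      simp only [Prod.mk.injEq, Subtype.mk.injEq]
      exact ⟨huu, hvv⟩
    · rintro ⟨x, hx⟩
      obtain ⟨u, ⟨huB, huv⟩, -⟩ := hB₂ x hx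
      refine ⟨⟨⟨u, huB⟩, ⟨x + u, huv⟩⟩, Subtype.ext ?_⟩
      show u + (x + u) = x
      rw [add_comm x u]
      exact add_add_cancel_left u x
  rw [← Nat.card_eq_of_bijective f hbij, Nat.card_prod, Nat.card_eq_finsetCard]

end ZQRM

/-- Recursive decomposition of zero-rate QRM codewords: for
`-1 ≤ r ≤ r◇ < m+1` and `w = (w₁, w₂) ∈ RM(r◇, m+1)`, the state
`|w⟩⁽⁰⁾_{r,m+1}` (uniform superposition over `w + RM(r, m+1)`) equals
`(1/√|B|) ∑_{u ∈ B} |w₁+u⟩⁽⁰⁾_{r-1,m} ⊗ |w₂+u⟩⁽⁰⁾_{r-1,m}`, for any set `B` of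
coset representatives of `RM(r, m) / RM(r-1, m)`. -/
theorem zQRM_recursive_decomposition (m : ℕ) (r rd : ℤ)
    (h₁ : -1 ≤ r) (h₂ : r ≤ rd) (h₃ : rd < (m : ℤ) + 1)
    (w : Fin (2^(m+1)) → ZMod 2) (hw : w ∈ RMz (m+1) rd)
    (B : Finset (Fin (2^m) → ZMod 2))
    (hB₁ : ∀ u ∈ B, u ∈ RMz m r)
    (hB₂ : ∀ v ∈ RMz m r, ∃! u, u ∈ B ∧ v + u ∈ RMz m (r - 1)) :
    cosetKet (RMz (m+1) r) w = fun b =>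
      ((1 / Real.sqrt B.card : ℝ) : ℂ) *
        ∑ u ∈ B,
          cosetKet (RMz m (r - 1)) (lowHalf m w + u) (lowHalf m b) *
            cosetKet (RMz m (r - 1)) (highHalf m w + u) (highHalf m b) := by
  classical
  funext b
  have hplotiff := ZQRM.mem_RMz_succ_iff (m := m) (r := r) (b + w)
  have hl : ∀ u, lowHalf m b + (lowHalf m w + u) = lowHalf m (b + w) + u := fun u => by
    rw [← add_assoc]; rfl
  have hh : ∀ u, highHalf m b + (highHalf m w + u) = highHalf m (b + w) + u := fun u => by
    rw [← add_assoc]; rfl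
  have hsc : ∀ a c d : ZMod 2, (a + c) + (a + d) = c + d := by decide
  simp only [cosetKet]
  simp only [hl, hh]
  by_cases hbw : b + w ∈ RMz (m+1) r
  · obtain ⟨hxr, hxy⟩ := hplotiff.1 hbw
    obtain ⟨u₀, ⟨hu₀B, hu₀⟩, huniq⟩ := hB₂ _ hxr
    have hyu₀ : highHalf m (b + w) + u₀ ∈ RMz m (r-1) := by
      have heq : highHalf m (b + w) + u₀
          = (lowHalf m (b + w) + highHalf m (b + w)) + (lowHalf m (b + w) + u₀) := by
        funext i; simp only [Pi.add_apply]; rw [hsc]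
      rw [heq]; exact add_mem hxy hu₀
    have hzero : ∀ u ∈ B, u ≠ u₀ →
        (if lowHalf m (b + w) + u ∈ RMz m (r-1) then
            ((1 / Real.sqrt (Nat.card (RMz m (r-1))) : ℝ) : ℂ) else 0)
          * (if highHalf m (b + w) + u ∈ RMz m (r-1) then
            ((1 / Real.sqrt (Nat.card (RMz m (r-1))) : ℝ) : ℂ) else 0) = 0 := by
      intro u huB hne
      rw [if_neg (fun hmem => hne (huniq u ⟨huB, hmem⟩)), zero_mul]
    rw [if_pos hbw, Finset.sum_eq_single_of_mem u₀ hu₀B hzero, if_pos hu₀, if_pos hyu₀]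
    have hQ : Nat.card (RMz (m+1) r)
        = B.card * (Nat.card (RMz m (r-1)) * Nat.card (RMz m (r-1))) := by
      rw [ZQRM.card_RMz_succ, ZQRM.card_RMz_eq_B h₁ B hB₁ hB₂, mul_assoc]
    have h0N : (0:ℝ) ≤ ((Nat.card (RMz m (r-1)) : ℕ) : ℝ) := Nat.cast_nonneg _
    have h0B : (0:ℝ) ≤ ((B.card : ℕ) : ℝ) := Nat.cast_nonneg _
    have hsqrt : Real.sqrt (Nat.card (RMz (m+1) r))
        = Real.sqrt B.card
          * (Real.sqrt (Nat.card (RMz m (r-1))) * Real.sqrt (Nat.card (RMz m (r-1)))) := by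
      rw [hQ]
      push_cast
      rw [Real.sqrt_mul h0B, Real.sqrt_mul h0N]
    have hkey : (1 / Real.sqrt (Nat.card (RMz (m+1) r)) : ℝ)
        = (1 / Real.sqrt B.card)
          * ((1 / Real.sqrt (Nat.card (RMz m (r-1))))
            * (1 / Real.sqrt (Nat.card (RMz m (r-1))))) := by
      rw [one_div_mul_one_div, one_div_mul_one_div, hsqrt]
    rw [hkey]
    push_cast
    ring
  · rw [if_neg hbw]
    have hzero : ∀ u ∈ B,
        (if lowHalf m (b + w) + u ∈ RMz m (r-1) then
            ((1 / Real.sqrt (Nat.card (RMz m (r-1))) : ℝ) : ℂ) else 0)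
          * (if highHalf m (b + w) + u ∈ RMz m (r-1) then
            ((1 / Real.sqrt (Nat.card (RMz m (r-1))) : ℝ) : ℂ) else 0) = 0 := by
      intro u huB
      by_cases hyu : highHalf m (b + w) + u ∈ RMz m (r-1)
      · by_cases hxu : lowHalf m (b + w) + u ∈ RMz m (r-1)
        · exfalso
          apply hbw
          refine hplotiff.2 ⟨?_, ?_⟩
          · have heq : lowHalf m (b + w) = (lowHalf m (b + w) + u) + u :=
              (ZQRM.add_add_cancel_right _ _).symm
            rw [heq]
            exact add_mem (ZQRM.RMz_mono (by omega) hxu) (hB₁ u huB)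
          · have heq : lowHalf m (b + w) + highHalf m (b + w)
                = (lowHalf m (b + w) + u) + (highHalf m (b + w) + u) := by
              funext i
              simp only [Pi.add_apply]
              have hsc2 : ∀ a c d : ZMod 2, a + c = (a + d) + (c + d) := by decide
              exact hsc2 _ _ _
            rw [heq]
            exact add_mem hxu hyu
        · rw [if_neg hxu, zero_mul]
      · rw [if_neg hyu, mul_zero]
    rw [Finset.sum_eq_zero hzero, mul_zero]
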